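/- Let q > 1, 0 < λ₀ ≤ (q-1)/(q(B+b)^q), y ∈ [-B, B] with B ≥ b > 0. Then the function ζ(y') = exp(-λ₀|y - y'|^q) is concave on [-b, b]. -/

import Mathlib

open Real

/-- Composition of a concave antitone function with a convex function is concave. -/
lemma concave_comp_convex_aux {s t : Set ℝ} {f g : ℝ → ℝ} (hf : ConvexOn ℝ s f)
    (hg : ConcaveOn ℝ t g) (hg' : AntitoneOn g t) (hmap : Set.MapsTo f s t) :
    ConcaveOn ℝ s (fun x => g (f x)) := by
  refine ⟨hf.1, fun x hx z hz a c ha hc hac => ?_⟩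
  have h1 : f (a • x + c • z) ≤ a * f x + c * f z := by
    simpa using hf.2 hx hz ha hc hac
  have hx' := hmap hx
  have hz' := hmap hz
  have hmem : a * f x + c * f z ∈ t := by
    simpa using hg.1 hx' hz' ha hc hac
  calc a • g (f x) + c • g (f z) ≤ g (a * f x + c * f z) := by
        simpa using hg.2 hx' hz' ha hc hac
    _ ≤ g (f (a • x + c • z)) := hg' (hmap (hf.1 hx hz ha hc hac)) hmem h1

/-- The key one-dimensional fact: `u ↦ exp(-(λ u^q))` is concave on `[0, C]`
when `λ q C^q ≤ q - 1`. -/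
lemma exp_neg_rpow_concave {q lam0 C : ℝ} (hq : 1 < q) (hC : 0 < C) (hlam0 : 0 < lam0)
    (hkey : lam0 * q * C ^ q ≤ q - 1) :
    ConcaveOn ℝ (Set.Icc 0 C) (fun u => Real.exp (-(lam0 * u ^ q))) := by
  have hq0 : 0 < q := lt_trans one_pos hq
  set f' : ℝ → ℝ := fun x => Real.exp (-(lam0 * x ^ q)) * (-(lam0 * (q * x ^ (q - 1)))) with hf'def
  set f'' : ℝ → ℝ := fun x =>
    Real.exp (-(lam0 * x ^ q)) * ((lam0 * (q * x ^ (q - 1)))^2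
      - lam0 * (q * ((q - 1) * x ^ (q - 1 - 1)))) with hf''def
  have hint : interior (Set.Icc (0:ℝ) C) = Set.Ioo 0 C := interior_Icc
  apply concaveOn_of_hasDerivWithinAt2_nonpos (f' := f') (f'' := f'') (convex_Icc 0 C)
  · -- continuity
    apply ContinuousOn.rexp
    apply ContinuousOn.neg
    apply ContinuousOn.mul continuousOn_const
    intro x _
    exact (Real.continuousAt_rpow_const x q (Or.inr hq0.le)).continuousWithinAt
  · -- first derivative
    intro x hx
    rw [hint] at hx
    have h1 : HasDerivAt (fun u : ℝ => u ^ q) (q * x ^ (q - 1)) x :=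
      Real.hasDerivAt_rpow_const (Or.inl (ne_of_gt hx.1))
    have h2 : HasDerivAt (fun u : ℝ => -(lam0 * u ^ q)) (-(lam0 * (q * x ^ (q - 1)))) x :=
      ((h1.const_mul lam0).neg)
    have h3 := h2.exp
    have : HasDerivAt (fun u : ℝ => Real.exp (-(lam0 * u ^ q))) (f' x) x := by
      simpa [hf'def, mul_comm] using h3
    exact this.hasDerivWithinAt
  · -- second derivative
    intro x hx
    rw [hint] at hx
    have h1 : HasDerivAt (fun u : ℝ => u ^ q) (q * x ^ (q - 1)) x :=
      Real.hasDerivAt_rpow_const (Or.inl (ne_of_gt hx.1))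
    have h2 : HasDerivAt (fun u : ℝ => -(lam0 * u ^ q)) (-(lam0 * (q * x ^ (q - 1)))) x :=
      ((h1.const_mul lam0).neg)
    have h3 : HasDerivAt (fun u : ℝ => Real.exp (-(lam0 * u ^ q)))
        (Real.exp (-(lam0 * x ^ q)) * (-(lam0 * (q * x ^ (q - 1))))) x := by
      simpa [mul_comm] using h2.exp
    have h4 : HasDerivAt (fun u : ℝ => u ^ (q - 1)) ((q - 1) * x ^ (q - 1 - 1)) x :=
      Real.hasDerivAt_rpow_const (Or.inl (ne_of_gt hx.1))
    have h5 : HasDerivAt (fun u : ℝ => -(lam0 * (q * u ^ (q - 1))))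
        (-(lam0 * (q * ((q - 1) * x ^ (q - 1 - 1))))) x :=
      (((h4.const_mul q).const_mul lam0).neg)
    have h6 := h3.mul h5
    have : HasDerivAt f' (f'' x) x := by
      convert h6 using 1
      · rfl
      · rfl
      · rfl
      simp only [f'']
      ring
    exact this.hasDerivWithinAt
  · -- nonpositivity of second derivative
    intro x hx
    rw [hint] at hx
    have hx0 : 0 < x := hx.1
    have hexp : 0 < Real.exp (-(lam0 * x ^ q)) := Real.exp_pos _
    have hkey2 : (lam0 * (q * x ^ (q - 1)))^2 ≤ lam0 * (q * ((q - 1) * x ^ (q - 1 - 1))) := by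
      have hxq : x ^ q ≤ C ^ q := Real.rpow_le_rpow hx0.le hx.2.le hq0.le
      have hA : lam0 * q * x ^ q ≤ q - 1 := by
        calc lam0 * q * x ^ q ≤ lam0 * q * C ^ q := by
              apply mul_le_mul_of_nonneg_left hxq
              positivity
          _ ≤ q - 1 := hkey
      have hsplit : x ^ (q - 1) * x ^ (q - 1) = x ^ (q - 1 - 1) * x ^ q := by
        rw [← Real.rpow_add hx0, ← Real.rpow_add hx0]
        ring_nf
      have hx1 : (0:ℝ) ≤ x ^ (q - 1 - 1) := (Real.rpow_pos_of_pos hx0 _).le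
      calc (lam0 * (q * x ^ (q - 1)))^2
          = (lam0 * q * x ^ (q - 1 - 1)) * (lam0 * q * x ^ q) := by
            rw [pow_two]; linear_combination (lam0*q)^2 * hsplit
        _ ≤ (lam0 * q * x ^ (q - 1 - 1)) * (q - 1) := by
            apply mul_le_mul_of_nonneg_left hA
            positivity
        _ = lam0 * (q * ((q - 1) * x ^ (q - 1 - 1))) := by ring
    have : (lam0 * (q * x ^ (q - 1)))^2 - lam0 * (q * ((q - 1) * x ^ (q - 1 - 1))) ≤ 0 := by
      linarith
    simp only [hf''def]
    exact mul_nonpos_of_nonneg_of_nonpos hexp.le this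

/-- Let `q > 1`, `B ≥ b > 0`, `0 < λ₀ ≤ (q-1)/(q(B+b)^q)` and `y ∈ [-B, B]`. Then
`ζ(y') = exp(-λ₀ |y - y'|^q)` is concave on `[-b, b]`. -/
theorem exp_neg_lq_concave (q B b lam0 y : ℝ) (hq : 1 < q) (hb : 0 < b) (hbB : b ≤ B)
    (hlam0 : 0 < lam0) (hlam0' : lam0 ≤ (q - 1) / (q * (B + b) ^ q))
    (hy : y ∈ Set.Icc (-B) B) :
    ConcaveOn ℝ (Set.Icc (-b) b) (fun y' => Real.exp (-(lam0 * |y - y'| ^ q))) := by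
  have hq0 : 0 < q := lt_trans one_pos hq
  have hC : 0 < B + b := by linarith
  have hCq : 0 < (B + b) ^ q := Real.rpow_pos_of_pos hC q
  have hkey : lam0 * q * (B + b) ^ q ≤ q - 1 := by
    have h := (div_le_div_iff₀ (by positivity) (by positivity)).mp
      (by simpa [div_one] using hlam0' : lam0 / 1 ≤ (q - 1) / (q * (B + b) ^ q))
    nlinarith
  -- the outer function
  have hconc := exp_neg_rpow_concave hq hC hlam0 hkey
  have hanti : AntitoneOn (fun u => Real.exp (-(lam0 * u ^ q))) (Set.Icc 0 (B + b)) := by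
    intro u hu v hv huv
    simp only
    apply Real.exp_le_exp.mpr
    apply neg_le_neg
    apply mul_le_mul_of_nonneg_left _ hlam0.le
    exact Real.rpow_le_rpow hu.1 huv hq0.le
  -- the inner function is convex
  have hcvx : ConvexOn ℝ (Set.Icc (-b) b) (fun y' : ℝ => |y - y'|) := by
    refine ⟨convex_Icc _ _, fun x _ z _ a c ha hc hac => ?_⟩
    simp only [smul_eq_mul]
    calc |y - (a * x + c * z)| = |a * (y - x) + c * (y - z)| := by
          congr 1; linear_combination (-y) * hac
      _ ≤ |a * (y - x)| + |c * (y - z)| := abs_add_le _ _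
      _ = a * |y - x| + c * |y - z| := by
          rw [abs_mul, abs_mul, abs_of_nonneg ha, abs_of_nonneg hc]
  have hmap : Set.MapsTo (fun y' : ℝ => |y - y'|) (Set.Icc (-b) b) (Set.Icc 0 (B + b)) := by
    intro x hx
    constructor
    · exact abs_nonneg _
    · have h1 : |y| ≤ B := abs_le.mpr ⟨hy.1, hy.2⟩
      have h2 : |x| ≤ b := abs_le.mpr ⟨hx.1, hx.2⟩
      calc |y - x| ≤ |y| + |x| := abs_sub _ _
        _ ≤ B + b := add_le_add h1 h2
  exact concave_comp_convex_aux (f := fun y' => |y - y'|)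
    (g := fun u => Real.exp (-(lam0 * u ^ q))) hcvx hconc hanti hmap
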